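/- arXiv:1706.03955 — 7 statements merged into one kernel-verified Lean document; each statement's English description precedes it below -/
import Mathlib

section
/- If random variables X1 and X2 are conditionally independent given X3 (meaning the conditional distribution of (X1,X2) given X3 equals the product of the conditional distributions of X1 given X3 and X2 given X3, almost surely with respect to the law of X3), then X1 and X2 are independent if and only if the Markov kernels P^{X1|X3} and P^{X2|X3} are independent with respect to P^{X3} (i.e., the image under P^{X3} of the diagonal product kernel equals the product of the images of the two kernels). -/
open MeasureTheory ProbabilityTheory

/-- The image (probability distribution) of a Markov kernel `M` under a measure `Q`:
`Q^M (A) = ∫ M(ω, A) dQ(ω)`. -/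
noncomputable def kernelImage {α β : Type*} [MeasurableSpace α] [MeasurableSpace β]
    (Q : Measure α) (M : ProbabilityTheory.Kernel α β) : Measure β :=
  Q.bind (fun a => M a)

/-- Two Markov kernels `M1, M2` on a probability space `(α, Q)` are `Q`-independent if the
image of their diagonal product is the product of their images. -/
def KernelIndep {α β γ : Type*} [MeasurableSpace α] [MeasurableSpace β] [MeasurableSpace γ]
    (Q : Measure α) (M1 : ProbabilityTheory.Kernel α β) (M2 : ProbabilityTheory.Kernel α γ) :
    Prop :=
  kernelImage Q (M1 ×ₖ M2) = (kernelImage Q M1).prod (kernelImage Q M2)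

lemma kernelImage_eq_snd_compProd {α β : Type*} [MeasurableSpace α] [MeasurableSpace β]
    (Q : Measure α) [SFinite Q] (M : ProbabilityTheory.Kernel α β) [IsSFiniteKernel M] :
    kernelImage Q M = (Q ⊗ₘ M).snd := by
  ext s hs
  rw [kernelImage, Measure.bind_apply hs M.measurable.aemeasurable, Measure.snd_apply hs,
    Measure.compProd_apply (measurable_snd hs)]
  rfl

lemma kernelImage_congr_ae {α β : Type*} [MeasurableSpace α] [MeasurableSpace β]
    {Q : Measure α} {M M' : ProbabilityTheory.Kernel α β}
    (h : ∀ᵐ a ∂Q, M a = M' a) : kernelImage Q M = kernelImage Q M' := by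
  ext s hs
  rw [kernelImage, kernelImage, Measure.bind_apply hs M.measurable.aemeasurable,
    Measure.bind_apply hs M'.measurable.aemeasurable]
  exact lintegral_congr_ae (h.mono fun a ha => by simp only [ha])

lemma compProd_condDistrib {Ω Ω1 Ω3 : Type*} [MeasurableSpace Ω] [MeasurableSpace Ω1]
    [MeasurableSpace Ω3] [StandardBorelSpace Ω1] [Nonempty Ω1]
    (P : Measure Ω) [IsFiniteMeasure P] {X1 : Ω → Ω1} {X3 : Ω → Ω3}
    (hX1 : Measurable X1) (hX3 : Measurable X3) :
    (P.map X3) ⊗ₘ condDistrib X1 X3 P = P.map (fun ω => (X3 ω, X1 ω)) := by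
  exact compProd_map_condDistrib hX1.aemeasurable

/-- If `X1` and `X2` are conditionally independent given `X3`, then `X1` and `X2` are
independent iff the Markov kernels `P^{X1|X3}` and `P^{X2|X3}` are `P^{X3}`-independent. -/
theorem stmt0 {Ω Ω1 Ω2 Ω3 : Type*} [MeasurableSpace Ω] [MeasurableSpace Ω1] [MeasurableSpace Ω2]
    [MeasurableSpace Ω3] [StandardBorelSpace Ω1] [Nonempty Ω1] [StandardBorelSpace Ω2]
    [Nonempty Ω2]
    (P : Measure Ω) [IsProbabilityMeasure P]
    (X1 : Ω → Ω1) (X2 : Ω → Ω2) (X3 : Ω → Ω3)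
    (hX1 : Measurable X1) (hX2 : Measurable X2) (hX3 : Measurable X3)
    (hci : ∀ᵐ ω3 ∂(P.map X3),
      condDistrib (fun ω => (X1 ω, X2 ω)) X3 P ω3
        = (condDistrib X1 X3 P ×ₖ condDistrib X2 X3 P) ω3) :
    IndepFun X1 X2 P ↔
      KernelIndep (P.map X3) (condDistrib X1 X3 P) (condDistrib X2 X3 P) := by
  have h1 : kernelImage (P.map X3) (condDistrib X1 X3 P) = P.map X1 := by
    rw [kernelImage_eq_snd_compProd, compProd_condDistrib P hX1 hX3,
      Measure.snd_map_prodMk hX3]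
  have h2 : kernelImage (P.map X3) (condDistrib X2 X3 P) = P.map X2 := by
    rw [kernelImage_eq_snd_compProd, compProd_condDistrib P hX2 hX3,
      Measure.snd_map_prodMk hX3]
  have h12 : kernelImage (P.map X3) (condDistrib X1 X3 P ×ₖ condDistrib X2 X3 P)
      = P.map (fun ω => (X1 ω, X2 ω)) := by
    rw [← kernelImage_congr_ae hci, kernelImage_eq_snd_compProd,
      compProd_condDistrib P (hX1.prodMk hX2) hX3, Measure.snd_map_prodMk hX3]
  rw [indepFun_iff_map_prod_eq_prod_map_map hX1.aemeasurable hX2.aemeasurable,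
    KernelIndep, h1, h2, h12]
end

section
/- There exist random variables X1, X2, X3 on a finite probability space such that X1 and X2 are independent and the kernels P^{X1|X3} and P^{X2|X3} are P^{X3}-independent, yet X1 and X2 are not conditionally independent given X3. (Hence (ii)+(iii) do not imply (i).) -/
open MeasureTheory ProbabilityTheory
open scoped ENNReal

/-- Cell counts for the counterexample `C(1000,1000,0,2000,0,2000,1000,1000)`. -/
noncomputable def n8 : Bool → Bool → Bool → ℝ≥0∞ := fun i j k =>
  match i, j, k with
  | false, false, false => 1000
  | false, false, true  => 1000
  | false, true,  false => 0
  | false, true,  true  => 2000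
  | true,  false, false => 0
  | true,  false, true  => 2000
  | true,  true,  false => 1000
  | true,  true,  true  => 1000

/-! ### Auxiliary construction -/

noncomputable def w8 : Bool × Bool × Bool → ℝ≥0∞ := fun p => n8 p.1 p.2.1 p.2.2 / 8000

noncomputable def P8 : Measure (Bool × Bool × Bool) :=
  Measure.sum (fun p => w8 p • Measure.dirac p)

lemma P8_apply (s : Set (Bool × Bool × Bool)) :
    P8 s = ∑ p : Bool × Bool × Bool, s.indicator w8 p := by
  rw [P8, Measure.sum_apply _ MeasurableSet.of_discrete, tsum_fintype]
  refine Finset.sum_congr rfl fun p _ => ?_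
  rw [Measure.smul_apply, smul_eq_mul, Measure.dirac_apply' _ MeasurableSet.of_discrete]
  by_cases h : p ∈ s <;> simp [h, Set.indicator_apply]

lemma q1000 : (1000 : ℝ≥0∞) / 8000 = 8⁻¹ := by
  rw [← one_div, ENNReal.div_eq_div_iff] <;> norm_num
lemma q2000 : (2000 : ℝ≥0∞) / 8000 = 4⁻¹ := by
  rw [← one_div, ENNReal.div_eq_div_iff] <;> norm_num
lemma q4000 : (4000 : ℝ≥0∞) / 8000 = 2⁻¹ := by
  rw [← one_div, ENNReal.div_eq_div_iff] <;> norm_num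
lemma q3000 : (3000 : ℝ≥0∞) / 8000 = 3 * 8⁻¹ := by
  rw [← div_eq_mul_inv, ENNReal.div_eq_div_iff] <;> norm_num
lemma q6000 : (6000 : ℝ≥0∞) / 8000 = 3 * 4⁻¹ := by
  rw [← div_eq_mul_inv, ENNReal.div_eq_div_iff] <;> norm_num
lemma h88 : (8 : ℝ≥0∞)⁻¹ + 8⁻¹ = 4⁻¹ := by
  rw [← one_div, ← one_div, ENNReal.div_add_div_same, ENNReal.div_eq_div_iff] <;> norm_num
lemma h44 : (4 : ℝ≥0∞)⁻¹ + 4⁻¹ = 2⁻¹ := by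
  rw [← one_div, ← one_div, ENNReal.div_add_div_same, ENNReal.div_eq_div_iff] <;> norm_num
lemma hmul : (2 : ℝ≥0∞)⁻¹ * 2⁻¹ = 4⁻¹ := by rw [← ENNReal.mul_inv] <;> norm_num
lemma k1 : (4 : ℝ≥0∞)⁻¹⁻¹ * 8⁻¹ = 2⁻¹ := by
  rw [inv_inv, ← div_eq_mul_inv, ← one_div, ENNReal.div_eq_div_iff] <;> norm_num
lemma k1' : (4 : ℝ≥0∞) * 8⁻¹ = 2⁻¹ := by
  rw [← div_eq_mul_inv, ← one_div, ENNReal.div_eq_div_iff] <;> norm_num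
lemma k2 : ((3 : ℝ≥0∞) * 4⁻¹)⁻¹ * (3 * 8⁻¹) = 2⁻¹ := by
  rw [ENNReal.mul_inv (by norm_num) (by norm_num), inv_inv,
    show (3 : ℝ≥0∞)⁻¹ * 4 * (3 * 8⁻¹) = (3⁻¹ * 3) * (4 * 8⁻¹) by ring,
    ENNReal.inv_mul_cancel (by norm_num) (by norm_num), one_mul, ← k1, inv_inv]

noncomputable def uB8 : Measure Bool :=
  (2 : ℝ≥0∞)⁻¹ • Measure.dirac false + (2 : ℝ≥0∞)⁻¹ • Measure.dirac true

instance P8_prob : IsProbabilityMeasure P8 := by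
  constructor
  rw [P8_apply]
  simp only [Set.indicator_univ, Fintype.sum_prod_type, Fintype.sum_bool, w8, n8]
  simp only [ENNReal.div_add_div_same]
  rw [ENNReal.div_eq_one_iff (by norm_num) (by norm_num)]
  norm_num

/-- There exist random variables `X1, X2, X3` on a finite probability space (uniform on 8000
points with cell counts `C(1000,1000,0,2000,0,2000,1000,1000)`) such that `X1` and `X2` are
independent and the kernels `P^{X1|X3}` and `P^{X2|X3}` are `P^{X3}`-independent, yet `X1` and
`X2` are not conditionally independent given `X3` (elementary form:
`P(X1=i,X2=j,X3=k)·P(X3=k) = P(X1=i,X3=k)·P(X2=j,X3=k)` fails for some `i,j,k`). -/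
theorem stmt8 : ∃ (Ω : Type) (_ : MeasurableSpace Ω) (P : Measure Ω)
    (_ : IsProbabilityMeasure P) (X1 X2 X3 : Ω → Bool),
    Measurable X1 ∧ Measurable X2 ∧ Measurable X3 ∧
    (∀ i j k : Bool, P {ω | X1 ω = i ∧ X2 ω = j ∧ X3 ω = k} = n8 i j k / 8000) ∧
    IndepFun X1 X2 P ∧
    KernelIndep (P.map X3) (condDistrib X1 X3 P) (condDistrib X2 X3 P) ∧
    ¬ (∀ i j k : Bool,
        P {ω | X1 ω = i ∧ X2 ω = j ∧ X3 ω = k} * P {ω | X3 ω = k}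
          = P {ω | X1 ω = i ∧ X3 ω = k} * P {ω | X2 ω = j ∧ X3 ω = k}) := by
  classical
  refine ⟨Bool × Bool × Bool, inferInstance, P8, inferInstance,
    (fun p => p.1), (fun p => p.2.1), (fun p => p.2.2),
    Measurable.of_discrete, Measurable.of_discrete, Measurable.of_discrete, ?_, ?_, ?_, ?_⟩
  · -- cell probabilities
    intro i j k
    rcases i <;> rcases j <;> rcases k <;>
      simp [P8_apply, Set.indicator_apply, Fintype.sum_prod_type, Fintype.sum_bool, w8, n8]
  · -- IndepFun
    rw [indepFun_iff_map_prod_eq_prod_map_map Measurable.of_discrete.aemeasurable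
      Measurable.of_discrete.aemeasurable]
    refine Measure.ext_of_singleton fun ⟨i, j⟩ => ?_
    rw [Measure.map_apply Measurable.of_discrete MeasurableSet.of_discrete,
        ← Set.singleton_prod_singleton, Measure.prod_prod,
        Measure.map_apply Measurable.of_discrete MeasurableSet.of_discrete,
        Measure.map_apply Measurable.of_discrete MeasurableSet.of_discrete]
    rcases i <;> rcases j <;>
      · simp only [P8_apply, Set.indicator_apply, Set.mem_preimage, Set.mem_singleton_iff, Prod.mk.injEq,
          Fintype.sum_prod_type, Fintype.sum_bool, w8, n8]
        norm_num [q1000, q2000]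
        simp only [h88, h44, hmul]
  · -- KernelIndep
    have hQf : P8.map (fun p : Bool × Bool × Bool => p.2.2) {false} = 4⁻¹ := by
      rw [Measure.map_apply Measurable.of_discrete MeasurableSet.of_discrete]
      simp only [P8_apply, Set.indicator_apply, Set.mem_preimage, Set.mem_singleton_iff,
        Fintype.sum_prod_type, Fintype.sum_bool, w8, n8]
      norm_num [ENNReal.div_add_div_same, q2000]
    have hQt : P8.map (fun p : Bool × Bool × Bool => p.2.2) {true} = 3 * 4⁻¹ := by
      rw [Measure.map_apply Measurable.of_discrete MeasurableSet.of_discrete]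
      simp only [P8_apply, Set.indicator_apply, Set.mem_preimage, Set.mem_singleton_iff,
        Fintype.sum_prod_type, Fintype.sum_bool, w8, n8]
      norm_num [ENNReal.div_add_div_same, q6000]
    have huBs : ∀ i : Bool, uB8 {i} = 2⁻¹ := by
      rintro (_ | _) <;>
        simp [uB8, Measure.dirac_apply' _ MeasurableSet.of_discrete]
    have hκ1 : ∀ b, condDistrib (fun p : Bool × Bool × Bool => p.1)
        (fun p : Bool × Bool × Bool => p.2.2) P8 b = uB8 := by
      intro b
      refine Measure.ext_of_singleton fun i => ?_
      rw [condDistrib_apply_of_ne_zero Measurable.of_discrete b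
          (by rcases b
              · rw [hQf]; norm_num
              · rw [hQt]; norm_num),
        huBs]
      rcases b <;> [rw [hQf]; rw [hQt]] <;>
        rw [Measure.map_apply Measurable.of_discrete MeasurableSet.of_discrete] <;> rcases i <;>
        · simp only [P8_apply, Set.indicator_apply, Set.mem_preimage, Set.mem_prod,
            Set.mem_singleton_iff, Prod.mk.injEq, Fintype.sum_prod_type, Fintype.sum_bool, w8, n8]
          norm_num [ENNReal.div_add_div_same]
          norm_num [q1000, q3000, k1', k2]
    have hκ2 : ∀ b, condDistrib (fun p : Bool × Bool × Bool => p.2.1)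
        (fun p : Bool × Bool × Bool => p.2.2) P8 b = uB8 := by
      intro b
      refine Measure.ext_of_singleton fun i => ?_
      rw [condDistrib_apply_of_ne_zero Measurable.of_discrete b
          (by rcases b
              · rw [hQf]; norm_num
              · rw [hQt]; norm_num),
        huBs]
      rcases b <;> [rw [hQf]; rw [hQt]] <;>
        rw [Measure.map_apply Measurable.of_discrete MeasurableSet.of_discrete] <;> rcases i <;>
        · simp only [P8_apply, Set.indicator_apply, Set.mem_preimage, Set.mem_prod,
            Set.mem_singleton_iff, Prod.mk.injEq, Fintype.sum_prod_type, Fintype.sum_bool, w8, n8]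
          norm_num [ENNReal.div_add_div_same]
          norm_num [q1000, q3000, k1', k2]
    haveI : IsProbabilityMeasure (P8.map (fun p : Bool × Bool × Bool => p.2.2)) :=
      Measure.isProbabilityMeasure_map Measurable.of_discrete.aemeasurable
    rw [KernelIndep, kernelImage, kernelImage, kernelImage,
      show (fun b => (condDistrib (fun p : Bool × Bool × Bool => p.1)
          (fun p : Bool × Bool × Bool => p.2.2) P8 ×ₖ
        condDistrib (fun p : Bool × Bool × Bool => p.2.1)
          (fun p : Bool × Bool × Bool => p.2.2) P8) b) = fun _ => uB8.prod uB8 from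
        funext fun b => by rw [Kernel.prod_apply, hκ1 b, hκ2 b],
      show (fun b => condDistrib (fun p : Bool × Bool × Bool => p.1)
          (fun p : Bool × Bool × Bool => p.2.2) P8 b) = fun _ => uB8 from funext hκ1,
      show (fun b => condDistrib (fun p : Bool × Bool × Bool => p.2.1)
          (fun p : Bool × Bool × Bool => p.2.2) P8 b) = fun _ => uB8 from funext hκ2,
      Measure.bind_const, Measure.bind_const, measure_univ, one_smul, one_smul]
  · -- failure of conditional independence
    intro h
    have h0 := h false false false
    have c1 : P8 {ω : Bool × Bool × Bool | ω.1 = false ∧ ω.2.1 = false ∧ ω.2.2 = false}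
        = 8⁻¹ := by
      simp only [P8_apply, Set.indicator_apply, Set.mem_setOf_eq, Fintype.sum_prod_type,
        Fintype.sum_bool, w8, n8]
      norm_num [q1000]
    have c2 : P8 {ω : Bool × Bool × Bool | ω.2.2 = false} = 4⁻¹ := by
      simp only [P8_apply, Set.indicator_apply, Set.mem_setOf_eq, Fintype.sum_prod_type,
        Fintype.sum_bool, w8, n8]
      norm_num [ENNReal.div_add_div_same, q2000]
    have c3 : P8 {ω : Bool × Bool × Bool | ω.1 = false ∧ ω.2.2 = false} = 8⁻¹ := by
      simp only [P8_apply, Set.indicator_apply, Set.mem_setOf_eq, Fintype.sum_prod_type,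
        Fintype.sum_bool, w8, n8]
      norm_num [ENNReal.div_add_div_same, q1000]
    have c4 : P8 {ω : Bool × Bool × Bool | ω.2.1 = false ∧ ω.2.2 = false} = 8⁻¹ := by
      simp only [P8_apply, Set.indicator_apply, Set.mem_setOf_eq, Fintype.sum_prod_type,
        Fintype.sum_bool, w8, n8]
      norm_num [ENNReal.div_add_div_same, q1000]
    rw [c1, c2, c3, c4] at h0
    have hne : ((8 : ℝ≥0∞))⁻¹ * 4⁻¹ ≠ 8⁻¹ * 8⁻¹ := by
      rw [Ne, ← ENNReal.mul_inv, ← ENNReal.mul_inv] <;> norm_num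
    exact hne h0
end

section
/- Conditional independence of Markov kernels M1 and M2 given M3 (on (Ω,𝒜,P)) holds if and only if the coordinate projections q1 and q2 are conditionally independent given q3 under the probability measure Q = P^{M1×M2×M3} on the product space Ω1×Ω2×Ω3. -/
open MeasureTheory ProbabilityTheory
open scoped ENNReal

/-- `L : Ω2 ⇝ Ω1` is a (regular) conditional distribution of the kernel `M1` given the kernel
`M2` on the probability space `(Ω, P)`:
`∫ M1(ω,A1)·M2(ω,A2) dP(ω) = ∫_{A2} L(ω2,A1) dP^{M2}(ω2)` for all measurable `A1, A2`. -/
def IsCondDistribKernel {Ω Ω1 Ω2 : Type*} [MeasurableSpace Ω] [MeasurableSpace Ω1]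
    [MeasurableSpace Ω2] (P : Measure Ω) (M1 : ProbabilityTheory.Kernel Ω Ω1)
    (M2 : ProbabilityTheory.Kernel Ω Ω2) (L : ProbabilityTheory.Kernel Ω2 Ω1) : Prop :=
  ∀ A1 A2 : Set _, MeasurableSet A1 → MeasurableSet A2 →
    ∫⁻ ω, M1 ω A1 * M2 ω A2 ∂P = ∫⁻ ω2 in A2, L ω2 A1 ∂(kernelImage P M2)

/-- Auxiliary: identification of `condDistrib` on a triple product space. -/
lemma aux_condDistrib_eq {Ω1 Ω2 Ω3 β : Type*} [MeasurableSpace Ω1] [MeasurableSpace Ω2]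
    [MeasurableSpace Ω3] [MeasurableSpace β] [StandardBorelSpace β] [Nonempty β]
    (Q : Measure (Ω1 × Ω2 × Ω3)) [IsProbabilityMeasure Q] {f : Ω1 × Ω2 × Ω3 → β}
    (hf : Measurable f) (L : ProbabilityTheory.Kernel Ω3 β) [IsMarkovKernel L]
    (h : ∀ A B : Set _, MeasurableSet A → MeasurableSet B →
      Q {x | f x ∈ A ∧ x.2.2 ∈ B} = ∫⁻ ω3 in B, L ω3 A ∂(Q.map (fun x => x.2.2))) :
    ∀ᵐ ω3 ∂(Q.map (fun x => x.2.2)),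
      L ω3 = condDistrib f (fun x => x.2.2) Q ω3 := by
  have hq3 : Measurable (fun x : Ω1 × Ω2 × Ω3 => x.2.2) := measurable_snd.snd
  have hPq3 : IsProbabilityMeasure (Q.map (fun x : Ω1 × Ω2 × Ω3 => x.2.2)) :=
    Measure.isProbabilityMeasure_map hq3.aemeasurable
  refine (condDistrib_ae_eq_of_measure_eq_compProd_of_measurable hq3 hf (κ := L) ?_).mono fun _ h => h.symm
  have hPmap : IsProbabilityMeasure (Q.map (fun x : Ω1 × Ω2 × Ω3 => (x.2.2, f x))) :=
    Measure.isProbabilityMeasure_map (hq3.prodMk hf).aemeasurable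
  refine ext_of_generate_finite _ generateFrom_prod.symm isPiSystem_prod ?_ ?_
  · rintro _ ⟨B, hB, A, hA, rfl⟩
    rw [Measure.map_apply (hq3.prodMk hf) (hB.prod hA),
      Measure.compProd_apply_prod hB hA, ← h A B hA hB]
    congr 1
    ext x
    simp [Set.mem_prod, and_comm]
  · simp only [measure_univ]

/-- Auxiliary: measure of an "associated rectangle" under an iterated product measure. -/
lemma aux_prod_assoc_rect {Ω1 Ω2 Ω3 : Type*} [MeasurableSpace Ω1] [MeasurableSpace Ω2]
    [MeasurableSpace Ω3] (μ1 : Measure Ω1) (μ2 : Measure Ω2) (μ3 : Measure Ω3)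
    [SFinite μ1] [SFinite μ2] [SFinite μ3]
    {A : Set (Ω1 × Ω2)} {B : Set Ω3} (hA : MeasurableSet A) (hB : MeasurableSet B) :
    (μ1.prod (μ2.prod μ3)) {x : Ω1 × Ω2 × Ω3 | (x.1, x.2.1) ∈ A ∧ x.2.2 ∈ B}
      = (μ1.prod μ2) A * μ3 B := by
  have hS : MeasurableSet {x : Ω1 × Ω2 × Ω3 | (x.1, x.2.1) ∈ A ∧ x.2.2 ∈ B} :=
    ((measurable_fst.prodMk measurable_snd.fst) hA).inter (measurable_snd.snd hB)
  rw [Measure.prod_apply hS]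
  have hslice : ∀ a : Ω1, (Prod.mk a ⁻¹' {x : Ω1 × Ω2 × Ω3 | (x.1, x.2.1) ∈ A ∧ x.2.2 ∈ B})
      = (Prod.mk a ⁻¹' A) ×ˢ B := by
    intro a; ext p; simp [Set.mem_prod]
  simp_rw [hslice, Measure.prod_prod]
  rw [lintegral_mul_const _ (measurable_measure_prodMk_left hA), Measure.prod_apply hA]

/-- Conditional independence of the Markov kernels `M1` and `M2` given `M3` holds iff the
coordinate projections `q1` and `q2` are conditionally independent given `q3` under
`Q = P^{M1×M2×M3}` on `Ω1 × Ω2 × Ω3`. -/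
theorem stmt14 {Ω Ω1 Ω2 Ω3 : Type*} [MeasurableSpace Ω] [MeasurableSpace Ω1]
    [MeasurableSpace Ω2] [MeasurableSpace Ω3]
    [StandardBorelSpace Ω1] [Nonempty Ω1] [StandardBorelSpace Ω2] [Nonempty Ω2]
    (P : Measure Ω) [IsProbabilityMeasure P]
    (M1 : ProbabilityTheory.Kernel Ω Ω1) (M2 : ProbabilityTheory.Kernel Ω Ω2)
    (M3 : ProbabilityTheory.Kernel Ω Ω3)
    [IsMarkovKernel M1] [IsMarkovKernel M2] [IsMarkovKernel M3]
    (L1 : ProbabilityTheory.Kernel Ω3 Ω1) (L2 : ProbabilityTheory.Kernel Ω3 Ω2)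
    (L12 : ProbabilityTheory.Kernel Ω3 (Ω1 × Ω2))
    [IsMarkovKernel L1] [IsMarkovKernel L2] [IsMarkovKernel L12]
    (hL1 : IsCondDistribKernel P M1 M3 L1)
    (hL2 : IsCondDistribKernel P M2 M3 L2)
    (hL12 : IsCondDistribKernel P (M1 ×ₖ M2) M3 L12)
    (Q : Measure (Ω1 × Ω2 × Ω3)) [IsProbabilityMeasure Q]
    (hQ : Q = P.bind (fun ω => (M1 ω).prod ((M2 ω).prod (M3 ω)))) :
    (∀ᵐ ω3 ∂(kernelImage P M3), L12 ω3 = (L1 ×ₖ L2) ω3) ↔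
      (∀ᵐ ω3 ∂(Q.map (fun x => x.2.2)),
        condDistrib (fun x : Ω1 × Ω2 × Ω3 => (x.1, x.2.1)) (fun x => x.2.2) Q ω3
          = ((condDistrib (fun x : Ω1 × Ω2 × Ω3 => x.1) (fun x => x.2.2) Q) ×ₖ
              (condDistrib (fun x : Ω1 × Ω2 × Ω3 => x.2.1) (fun x => x.2.2) Q)) ω3) := by
  have hq3 : Measurable (fun x : Ω1 × Ω2 × Ω3 => x.2.2) := measurable_snd.snd
  have hκmeas : Measurable (fun ω => (M1 ω).prod ((M2 ω).prod (M3 ω))) := by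
    have : (fun ω => (M1 ω).prod ((M2 ω).prod (M3 ω))) = ⇑(M1 ×ₖ (M2 ×ₖ M3)) := by
      ext1 ω; rw [Kernel.prod_apply, Kernel.prod_apply]
    rw [this]; exact Kernel.measurable _
  have hQapp : ∀ S : Set (Ω1 × Ω2 × Ω3), MeasurableSet S →
      Q S = ∫⁻ ω, (M1 ω).prod ((M2 ω).prod (M3 ω)) S ∂P := by
    intro S hS; rw [hQ, Measure.bind_apply hS hκmeas.aemeasurable]
  -- the marginal of Q on the third coordinate
  have hmap : Q.map (fun x => x.2.2) = kernelImage P M3 := by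
    ext B hB
    rw [Measure.map_apply hq3 hB, hQapp _ (hq3 hB),
      kernelImage, Measure.bind_apply hB (Kernel.measurable M3).aemeasurable]
    refine lintegral_congr fun ω => ?_
    have : (fun x : Ω1 × Ω2 × Ω3 => x.2.2) ⁻¹' B = Set.univ ×ˢ (Set.univ ×ˢ B) := by
      ext x; simp
    rw [this, Measure.prod_prod, Measure.prod_prod]
    simp
  -- identify the three condDistribs
  have h1 : ∀ᵐ ω3 ∂(Q.map (fun x => x.2.2)),
      L1 ω3 = condDistrib (fun x : Ω1 × Ω2 × Ω3 => x.1) (fun x => x.2.2) Q ω3 := by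
    refine aux_condDistrib_eq Q measurable_fst L1 ?_
    intro A B hA hB
    rw [hmap, ← hL1 A B hA hB, hQapp {x | x.1 ∈ A ∧ x.2.2 ∈ B} ((measurable_fst hA).inter (hq3 hB))]
    refine lintegral_congr fun ω => ?_
    have : {x : Ω1 × Ω2 × Ω3 | x.1 ∈ A ∧ x.2.2 ∈ B} = A ×ˢ (Set.univ ×ˢ B) := by
      ext x; simp
    rw [this, Measure.prod_prod, Measure.prod_prod]
    simp [mul_comm]
  have h2 : ∀ᵐ ω3 ∂(Q.map (fun x => x.2.2)),
      L2 ω3 = condDistrib (fun x : Ω1 × Ω2 × Ω3 => x.2.1) (fun x => x.2.2) Q ω3 := by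
    refine aux_condDistrib_eq Q measurable_snd.fst L2 ?_
    intro A B hA hB
    rw [hmap, ← hL2 A B hA hB, hQapp {x | x.2.1 ∈ A ∧ x.2.2 ∈ B} ((measurable_snd.fst hA).inter (hq3 hB))]
    refine lintegral_congr fun ω => ?_
    have : {x : Ω1 × Ω2 × Ω3 | x.2.1 ∈ A ∧ x.2.2 ∈ B} = Set.univ ×ˢ (A ×ˢ B) := by
      ext x; simp
    rw [this, Measure.prod_prod, Measure.prod_prod]
    simp
  have h12 : ∀ᵐ ω3 ∂(Q.map (fun x => x.2.2)),
      L12 ω3 = condDistrib (fun x : Ω1 × Ω2 × Ω3 => (x.1, x.2.1)) (fun x => x.2.2) Q ω3 := by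
    refine aux_condDistrib_eq Q (measurable_fst.prodMk measurable_snd.fst) L12 ?_
    intro A B hA hB
    rw [hmap, ← hL12 A B hA hB,
      hQapp {x | (x.1, x.2.1) ∈ A ∧ x.2.2 ∈ B} (((measurable_fst.prodMk measurable_snd.fst) hA).inter (hq3 hB))]
    refine lintegral_congr fun ω => ?_
    rw [aux_prod_assoc_rect _ _ _ hA hB, Kernel.prod_apply]
  -- transfer along the a.e. identifications
  rw [← hmap]
  constructor
  · intro h
    filter_upwards [h1, h2, h12, h] with ω3 e1 e2 e12 e
    rw [← e12, e, Kernel.prod_apply, Kernel.prod_apply, e1, e2]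
  · intro h
    filter_upwards [h1, h2, h12, h] with ω3 e1 e2 e12 e
    rw [e12, e, Kernel.prod_apply, Kernel.prod_apply, ← e1, ← e2]
end

section
/- Density characterization of kernel conditioning: Suppose M_i(ω,·) = φ_i(ω,·) μ_i with φ_i jointly measurable nonnegative, μ_i σ-finite, i=1,2,3. Then ω3 ↦ ∫_Ω φ_3(ω,ω3) dP(ω) is a μ3-density of P^{M3}, and for i=1,2 the conditional distribution P^{M_i|M_3} exists with, for P^{M3}-a.e. ω3, the map ω_i ↦ (∫_Ω φ_i(ω,ω_i)φ_3(ω,ω3)dP(ω)) / (∫_Ω φ_3(ω,ω3)dP(ω)) being a μ_i-density of P^{M_i|M_3}(ω3,·). -/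
open MeasureTheory ProbabilityTheory
open scoped ENNReal

section Aux

variable {Ω Ω1 Ω3 : Type*} [MeasurableSpace Ω] [MeasurableSpace Ω1] [MeasurableSpace Ω3]

theorem aux_image (P : Measure Ω) [IsProbabilityMeasure P]
    (M3 : Kernel Ω Ω3) [IsMarkovKernel M3]
    (μ3 : Measure Ω3) [SigmaFinite μ3]
    (φ3 : Ω → Ω3 → ℝ≥0∞) (hφ3 : Measurable (Function.uncurry φ3))
    (hM3 : ∀ ω, M3 ω = μ3.withDensity (φ3 ω)) :
    kernelImage P M3 = μ3.withDensity (fun ω3 => ∫⁻ ω, φ3 ω ω3 ∂P) := by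
  ext A hA
  rw [kernelImage, Measure.bind_apply hA M3.measurable.aemeasurable, withDensity_apply _ hA]
  calc ∫⁻ ω, M3 ω A ∂P = ∫⁻ ω, ∫⁻ ω3 in A, φ3 ω ω3 ∂μ3 ∂P := by
        simp_rw [hM3, withDensity_apply _ hA]
    _ = ∫⁻ ω3 in A, ∫⁻ ω, φ3 ω ω3 ∂P ∂μ3 := lintegral_lintegral_swap hφ3.aemeasurable

theorem aux_cond (P : Measure Ω) [IsProbabilityMeasure P]
    (M1 : Kernel Ω Ω1) (M3 : Kernel Ω Ω3) [IsMarkovKernel M1] [IsMarkovKernel M3]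
    (μ1 : Measure Ω1) (μ3 : Measure Ω3) [SigmaFinite μ1] [SigmaFinite μ3]
    (φ1 : Ω → Ω1 → ℝ≥0∞) (φ3 : Ω → Ω3 → ℝ≥0∞)
    (hφ1 : Measurable (Function.uncurry φ1)) (hφ3 : Measurable (Function.uncurry φ3))
    (hM1 : ∀ ω, M1 ω = μ1.withDensity (φ1 ω)) (hM3 : ∀ ω, M3 ω = μ3.withDensity (φ3 ω)) :
    ∃ L1 : Kernel Ω3 Ω1, IsCondDistribKernel P M1 M3 L1 ∧
      ∀ ω3, L1 ω3 = μ1.withDensity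
        (fun ω1 => (∫⁻ ω, φ1 ω ω1 * φ3 ω ω3 ∂P) / ∫⁻ ω, φ3 ω ω3 ∂P) := by
  set g : Ω3 → ℝ≥0∞ := fun ω3 => ∫⁻ ω, φ3 ω ω3 ∂P with hgdef
  set f : Ω1 → Ω3 → ℝ≥0∞ := fun ω1 ω3 => ∫⁻ ω, φ1 ω ω1 * φ3 ω ω3 ∂P with hfdef
  have hg : Measurable g := hφ3.lintegral_prod_left'
  have hf : Measurable (fun p : Ω1 × Ω3 => f p.1 p.2) := by
    have : Measurable (fun q : Ω × (Ω1 × Ω3) => φ1 q.1 q.2.1 * φ3 q.1 q.2.2) :=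
      (hφ1.comp (measurable_fst.prodMk (measurable_snd.fst))).mul
        (hφ3.comp (measurable_fst.prodMk measurable_snd.snd))
    exact this.lintegral_prod_left'
  have hfg : Measurable (fun p : Ω1 × Ω3 => f p.1 p.2 / g p.2) :=
    hf.div (hg.comp measurable_snd)
  refine ⟨⟨fun ω3 => μ1.withDensity (fun ω1 => f ω1 ω3 / g ω3), ?_⟩, ?_, fun ω3 => rfl⟩
  · apply Measure.measurable_of_measurable_coe
    intro s hs
    simp_rw [withDensity_apply _ hs]
    exact hfg.lintegral_prod_left'
  intro A1 A3 hA1 hA3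
  -- the key cancellation fact
  have key : ∀ ω3, g ω3 ≠ ∞ →
      g ω3 * ∫⁻ ω1 in A1, f ω1 ω3 / g ω3 ∂μ1 = ∫⁻ ω1 in A1, f ω1 ω3 ∂μ1 := by
    intro ω3 htop
    have hfm : Measurable (fun ω1 => f ω1 ω3) := hf.comp (measurable_id.prodMk measurable_const)
    by_cases h0 : g ω3 = 0
    · have h3 : ∀ᵐ ω ∂P, φ3 ω ω3 = 0 :=
        (lintegral_eq_zero_iff hφ3.of_uncurry_right).mp h0
      have hf0 : ∀ ω1, f ω1 ω3 = 0 := by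
        intro ω1
        rw [hfdef]
        simp only
        rw [lintegral_eq_zero_iff (f := fun ω => φ1 ω ω1 * φ3 ω ω3) (hφ1.of_uncurry_right.mul hφ3.of_uncurry_right)]
        filter_upwards [h3] with ω hω using by simp [hω]
      simp [h0, hf0]
    · simp_rw [div_eq_mul_inv]
      rw [lintegral_mul_const _ hfm, ← mul_comm ((g ω3)⁻¹), ← mul_assoc,
        ENNReal.mul_inv_cancel h0 htop, one_mul]
  have hgint : ∫⁻ ω3, g ω3 ∂μ3 = 1 := by
    have h1 : kernelImage P M3 Set.univ = 1 := by
      rw [kernelImage, Measure.bind_apply MeasurableSet.univ M3.measurable.aemeasurable]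
      simp
    rw [aux_image P M3 μ3 φ3 hφ3 hM3] at h1
    rwa [withDensity_apply _ MeasurableSet.univ, Measure.restrict_univ] at h1
  have hgtop : ∀ᵐ ω3 ∂μ3, g ω3 < ∞ := ae_lt_top hg (by rw [hgint]; exact ENNReal.one_ne_top)
  -- compute the LHS
  have lhs_eq : ∫⁻ ω, M1 ω A1 * M3 ω A3 ∂P
      = ∫⁻ ω3 in A3, ∫⁻ ω1 in A1, f ω1 ω3 ∂μ1 ∂μ3 := by
    have step1 : ∀ ω, M1 ω A1 * M3 ω A3 = ∫⁻ ω3 in A3, M1 ω A1 * φ3 ω ω3 ∂μ3 := by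
      intro ω
      rw [hM3, withDensity_apply _ hA3, lintegral_const_mul _ hφ3.of_uncurry_left]
    simp_rw [step1]
    rw [lintegral_lintegral_swap
      (((M1.measurable_coe hA1).comp measurable_fst).mul hφ3).aemeasurable]
    apply lintegral_congr
    intro ω3
    have step2 : ∀ ω, M1 ω A1 * φ3 ω ω3 = ∫⁻ ω1 in A1, φ1 ω ω1 * φ3 ω ω3 ∂μ1 := by
      intro ω
      rw [hM1, withDensity_apply _ hA1, lintegral_mul_const _ hφ1.of_uncurry_left]
    simp_rw [step2]
    exact lintegral_lintegral_swap
      (hφ1.mul (hφ3.comp (measurable_fst.prodMk measurable_const))).aemeasurable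
  -- compute the RHS
  rw [lhs_eq, aux_image P M3 μ3 φ3 hφ3 hM3, restrict_withDensity hA3,
    lintegral_withDensity_eq_lintegral_mul _ hg
      (((⟨fun ω3 => μ1.withDensity (fun ω1 => f ω1 ω3 / g ω3), by
          apply Measure.measurable_of_measurable_coe
          intro s hs
          simp_rw [withDensity_apply _ hs]
          exact hfg.lintegral_prod_left'⟩ : Kernel Ω3 Ω1).measurable_coe hA1))]
  apply lintegral_congr_ae
  filter_upwards [ae_restrict_of_ae hgtop] with ω3 hω3
  show (∫⁻ ω1 in A1, f ω1 ω3 ∂μ1) = g ω3 * (μ1.withDensity fun ω1 => f ω1 ω3 / g ω3) A1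
  rw [withDensity_apply _ hA1, key ω3 hω3.ne]

end Aux

/-- Density characterization of kernel conditioning: if `M_i(ω,·) = φ_i(ω,·)·μ_i`, then
`ω3 ↦ ∫ φ_3(ω,ω3) dP(ω)` is a `μ3`-density of `P^{M3}`, and for `i = 1, 2` the conditional
distribution `P^{M_i|M_3}` exists and, `P^{M3}`-a.e., has `μ_i`-density
`ω_i ↦ (∫ φ_i(ω,ω_i)·φ_3(ω,ω3) dP(ω)) / (∫ φ_3(ω,ω3) dP(ω))`. -/
theorem stmt15 {Ω Ω1 Ω2 Ω3 : Type*} [MeasurableSpace Ω] [MeasurableSpace Ω1]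
    [MeasurableSpace Ω2] [MeasurableSpace Ω3]
    (P : Measure Ω) [IsProbabilityMeasure P]
    (M1 : ProbabilityTheory.Kernel Ω Ω1) (M2 : ProbabilityTheory.Kernel Ω Ω2)
    (M3 : ProbabilityTheory.Kernel Ω Ω3)
    [IsMarkovKernel M1] [IsMarkovKernel M2] [IsMarkovKernel M3]
    (μ1 : Measure Ω1) (μ2 : Measure Ω2) (μ3 : Measure Ω3)
    [SigmaFinite μ1] [SigmaFinite μ2] [SigmaFinite μ3]
    (φ1 : Ω → Ω1 → ℝ≥0∞) (φ2 : Ω → Ω2 → ℝ≥0∞) (φ3 : Ω → Ω3 → ℝ≥0∞)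
    (hφ1 : Measurable (Function.uncurry φ1)) (hφ2 : Measurable (Function.uncurry φ2))
    (hφ3 : Measurable (Function.uncurry φ3))
    (hM1 : ∀ ω, M1 ω = μ1.withDensity (φ1 ω))
    (hM2 : ∀ ω, M2 ω = μ2.withDensity (φ2 ω))
    (hM3 : ∀ ω, M3 ω = μ3.withDensity (φ3 ω)) :
    kernelImage P M3 = μ3.withDensity (fun ω3 => ∫⁻ ω, φ3 ω ω3 ∂P) ∧
    (∃ L1 : ProbabilityTheory.Kernel Ω3 Ω1, IsCondDistribKernel P M1 M3 L1 ∧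
      ∀ᵐ ω3 ∂(kernelImage P M3),
        L1 ω3 = μ1.withDensity
          (fun ω1 => (∫⁻ ω, φ1 ω ω1 * φ3 ω ω3 ∂P) / ∫⁻ ω, φ3 ω ω3 ∂P)) ∧
    (∃ L2 : ProbabilityTheory.Kernel Ω3 Ω2, IsCondDistribKernel P M2 M3 L2 ∧
      ∀ᵐ ω3 ∂(kernelImage P M3),
        L2 ω3 = μ2.withDensity
          (fun ω2 => (∫⁻ ω, φ2 ω ω2 * φ3 ω ω3 ∂P) / ∫⁻ ω, φ3 ω ω3 ∂P)) := by
  refine ⟨aux_image P M3 μ3 φ3 hφ3 hM3, ?_, ?_⟩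
  · obtain ⟨L1, hL1, hL1'⟩ := aux_cond P M1 M3 μ1 μ3 φ1 φ3 hφ1 hφ3 hM1 hM3
    exact ⟨L1, hL1, Filter.Eventually.of_forall hL1'⟩
  · obtain ⟨L2, hL2, hL2'⟩ := aux_cond P M2 M3 μ2 μ3 φ2 φ3 hφ2 hφ3 hM2 hM3
    exact ⟨L2, hL2, Filter.Eventually.of_forall hL2'⟩
end

section
/- Generalization of the main theorem: Let X_i, i=1,2,3,4 be random variables with X4 = f∘X3 for a measurable f : Ω3 → Ω4. If X1 and X2 are conditionally independent given X3, then X1 and X2 are conditionally independent given X4 if and only if the kernels P^{X1|X3} and P^{X2|X3} are conditionally independent given P^{X4|X3} with respect to the measure P^{X3}. -/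
open MeasureTheory ProbabilityTheory
open scoped ENNReal

section Aux

variable {Ω β Ω' : Type*} [MeasurableSpace Ω] [MeasurableSpace β] [MeasurableSpace Ω']
  [StandardBorelSpace Ω'] [Nonempty Ω']

lemma aux_compProd_condDistrib (P : Measure Ω) [IsFiniteMeasure P]
    {X : Ω → β} {Y : Ω → Ω'} (hY : Measurable Y) :
    (P.map X) ⊗ₘ condDistrib Y X P = P.map fun a => (X a, Y a) := by
  rw [condDistrib, ← Measure.fst_map_prodMk hY]
  exact Measure.disintegrate _ _

lemma aux_condDistrib_comp {Ω4 : Type*} [MeasurableSpace Ω4] [StandardBorelSpace Ω4] [Nonempty Ω4]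
    (P : Measure Ω) [IsProbabilityMeasure P] {X : Ω → β} {f : β → Ω4}
    (hX : Measurable X) (hf : Measurable f) :
    ∀ᵐ b ∂(P.map X), Kernel.deterministic f hf b = condDistrib (f ∘ X) X P b := by
  haveI : IsProbabilityMeasure (P.map X) := Measure.isProbabilityMeasure_map hX.aemeasurable
  refine (condDistrib_ae_eq_of_measure_eq_compProd X (hf.comp hX).aemeasurable
    (κ := Kernel.deterministic f hf) ?_).mono fun _ h => h.symm
  haveI : IsProbabilityMeasure (P.map fun x => (X x, (f ∘ X) x)) :=
    Measure.isProbabilityMeasure_map (hX.prodMk (hf.comp hX)).aemeasurable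
  haveI : IsProbabilityMeasure (P.map fun x => (X x, f (X x))) :=
    Measure.isProbabilityMeasure_map (hX.prodMk (hf.comp hX)).aemeasurable
  refine ext_of_generate_finite _ generateFrom_prod.symm isPiSystem_prod ?_ (by simp)
  rintro _ ⟨A, hA, B, hB, rfl⟩
  rw [Measure.map_apply (hX.prodMk (hf.comp hX)) (hA.prod hB),
    Measure.compProd_apply_prod hA hB]
  have h1 : ∀ a, Kernel.deterministic f hf a B = (f ⁻¹' B).indicator (fun _ => (1 : ℝ≥0∞)) a := by
    intro a
    rw [Kernel.deterministic_apply' hf a hB]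
    by_cases h : f a ∈ B <;> simp [h]
  simp_rw [h1]
  rw [setLIntegral_indicator (hf hB), setLIntegral_one,
    Measure.map_apply hX ((hf hB).inter hA)]
  congr 1
  ext ω
  simp [Set.mem_preimage, and_comm]

end Aux

section Aux2

variable {Ω Ω3 Ω4 : Type*} [MeasurableSpace Ω] [MeasurableSpace Ω3] [MeasurableSpace Ω4]
  [StandardBorelSpace Ω4] [Nonempty Ω4]

lemma aux_kernelImage (P : Measure Ω) [IsProbabilityMeasure P] {X3 : Ω → Ω3} {f : Ω3 → Ω4}
    (hX3 : Measurable X3) (hf : Measurable f) :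
    kernelImage (P.map X3) (condDistrib (f ∘ X3) X3 P) = P.map (f ∘ X3) := by
  haveI : IsProbabilityMeasure (P.map X3) := Measure.isProbabilityMeasure_map hX3.aemeasurable
  have h1 : (P.map X3).bind (fun a => condDistrib (f ∘ X3) X3 P a)
      = (P.map X3).bind (fun a => Measure.dirac (f a)) := by
    have hd : Measurable fun a : Ω3 => Measure.dirac (f a) :=
      Measure.measurable_dirac.comp hf
    ext s hs
    rw [Measure.bind_apply hs (Kernel.measurable _).aemeasurable, Measure.bind_apply hs hd.aemeasurable]
    refine lintegral_congr_ae ?_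
    filter_upwards [aux_condDistrib_comp P hX3 hf] with a ha
    rw [← ha, Kernel.deterministic_apply]
  rw [kernelImage, h1, Measure.bind_dirac_eq_map _ hf, Measure.map_map hf hX3]

lemma aux_unique {Ω' : Type*} [MeasurableSpace Ω'] [StandardBorelSpace Ω'] [Nonempty Ω']
    (P : Measure Ω) [IsProbabilityMeasure P]
    {X3 : Ω → Ω3} {f : Ω3 → Ω4} {Y : Ω → Ω'}
    (hX3 : Measurable X3) (hf : Measurable f) (hY : Measurable Y)
    (M : Kernel Ω3 Ω') [IsMarkovKernel M]
    (hM : ∀ᵐ ω3 ∂(P.map X3), M ω3 = condDistrib Y X3 P ω3)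
    (L : Kernel Ω4 Ω') [IsMarkovKernel L]
    (hL : IsCondDistribKernel (P.map X3) M (condDistrib (f ∘ X3) X3 P) L) :
    ∀ᵐ ω4 ∂(P.map (f ∘ X3)), L ω4 = condDistrib Y (f ∘ X3) P ω4 := by
  haveI : IsProbabilityMeasure (P.map X3) := Measure.isProbabilityMeasure_map hX3.aemeasurable
  haveI : IsProbabilityMeasure (P.map (f ∘ X3)) :=
    Measure.isProbabilityMeasure_map (hf.comp hX3).aemeasurable
  refine (condDistrib_ae_eq_of_measure_eq_compProd (f ∘ X3) hY.aemeasurable (κ := L) ?_).mono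
    fun _ h => h.symm
  haveI : IsProbabilityMeasure (P.map fun x => ((f ∘ X3) x, Y x)) :=
    Measure.isProbabilityMeasure_map ((hf.comp hX3).prodMk hY).aemeasurable
  haveI : IsProbabilityMeasure (P.map fun x => (f (X3 x), Y x)) :=
    Measure.isProbabilityMeasure_map ((hf.comp hX3).prodMk hY).aemeasurable
  refine ext_of_generate_finite _ generateFrom_prod.symm isPiSystem_prod ?_ (by simp)
  rintro _ ⟨A2, hA2, A1, hA1, rfl⟩
  have h := hL A1 A2 hA1 hA2
  rw [aux_kernelImage P hX3 hf] at h
  rw [Measure.map_apply ((hf.comp hX3).prodMk hY) (hA2.prod hA1),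
    Measure.compProd_apply_prod hA2 hA1, ← h]
  have h2 : ∫⁻ ω3, M ω3 A1 * condDistrib (f ∘ X3) X3 P ω3 A2 ∂(P.map X3)
      = ∫⁻ ω3, (f ⁻¹' A2).indicator (fun ω3 => condDistrib Y X3 P ω3 A1) ω3 ∂(P.map X3) := by
    refine lintegral_congr_ae ?_
    filter_upwards [hM, aux_condDistrib_comp P hX3 hf] with ω3 h1 hd
    rw [h1, ← hd, Kernel.deterministic_apply' hf _ hA2]
    by_cases hmem : f ω3 ∈ A2 <;> simp [hmem]
  rw [h2, lintegral_indicator (hf hA2),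
    ← Measure.compProd_apply_prod (hf hA2) hA1, aux_compProd_condDistrib P hY,
    Measure.map_apply (hX3.prodMk hY) ((hf hA2).prod hA1)]
  rfl

end Aux2

/-- Generalization of the main theorem: if `X4 = f ∘ X3` and `X1 ⟂ X2 | X3`, then
`X1 ⟂ X2 | X4` iff the kernels `P^{X1|X3}` and `P^{X2|X3}` are conditionally independent
given `P^{X4|X3}` with respect to `P^{X3}`. -/
theorem stmt16 {Ω Ω1 Ω2 Ω3 Ω4 : Type*} [MeasurableSpace Ω] [MeasurableSpace Ω1]
    [MeasurableSpace Ω2] [MeasurableSpace Ω3] [MeasurableSpace Ω4]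
    [StandardBorelSpace Ω1] [Nonempty Ω1] [StandardBorelSpace Ω2] [Nonempty Ω2]
    [StandardBorelSpace Ω4] [Nonempty Ω4]
    (P : Measure Ω) [IsProbabilityMeasure P]
    (X1 : Ω → Ω1) (X2 : Ω → Ω2) (X3 : Ω → Ω3) (X4 : Ω → Ω4) (f : Ω3 → Ω4)
    (hX1 : Measurable X1) (hX2 : Measurable X2) (hX3 : Measurable X3) (hf : Measurable f)
    (hX4 : X4 = f ∘ X3)
    (hci : ∀ᵐ ω3 ∂(P.map X3),
      condDistrib (fun ω => (X1 ω, X2 ω)) X3 P ω3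
        = (condDistrib X1 X3 P ×ₖ condDistrib X2 X3 P) ω3)
    (L1 : ProbabilityTheory.Kernel Ω4 Ω1) (L2 : ProbabilityTheory.Kernel Ω4 Ω2)
    (L12 : ProbabilityTheory.Kernel Ω4 (Ω1 × Ω2))
    [IsMarkovKernel L1] [IsMarkovKernel L2] [IsMarkovKernel L12]
    (hL1 : IsCondDistribKernel (P.map X3) (condDistrib X1 X3 P) (condDistrib X4 X3 P) L1)
    (hL2 : IsCondDistribKernel (P.map X3) (condDistrib X2 X3 P) (condDistrib X4 X3 P) L2)
    (hL12 : IsCondDistribKernel (P.map X3)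
      (condDistrib X1 X3 P ×ₖ condDistrib X2 X3 P) (condDistrib X4 X3 P) L12) :
    (∀ᵐ ω4 ∂(P.map X4),
        condDistrib (fun ω => (X1 ω, X2 ω)) X4 P ω4
          = (condDistrib X1 X4 P ×ₖ condDistrib X2 X4 P) ω4)
      ↔ (∀ᵐ ω4 ∂(kernelImage (P.map X3) (condDistrib X4 X3 P)),
          L12 ω4 = (L1 ×ₖ L2) ω4) := by
  subst hX4
  have h1 := aux_unique P hX3 hf hX1 (condDistrib X1 X3 P)
    (Filter.Eventually.of_forall fun _ => rfl) L1 hL1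
  have h2 := aux_unique P hX3 hf hX2 (condDistrib X2 X3 P)
    (Filter.Eventually.of_forall fun _ => rfl) L2 hL2
  have h12 := aux_unique P hX3 hf (hX1.prodMk hX2)
    (condDistrib X1 X3 P ×ₖ condDistrib X2 X3 P)
    (hci.mono fun ω3 h => h.symm) L12 hL12
  rw [aux_kernelImage P hX3 hf]
  constructor
  · intro h
    filter_upwards [h, h1, h2, h12] with ω4 hA hB1 hB2 hB12
    rw [hB12, hA, Kernel.prod_apply, Kernel.prod_apply, ← hB1, ← hB2]
  · intro h
    filter_upwards [h, h1, h2, h12] with ω4 hA hB1 hB2 hB12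
    rw [← hB12, hA, Kernel.prod_apply, Kernel.prod_apply, hB1, hB2]
end

section
/- If X4 = f∘X3, then under conditional independence of X1 and X2 given X3, the conditional distribution (with respect to P^{X3}) of the diagonal product kernel P^{X1|X3} × P^{X2|X3} given the kernel P^{X4|X3} equals the conditional distribution P^{(X1,X2)|X4}; moreover (without assuming conditional independence), the conditional distribution of P^{X_i|X3} given P^{X4|X3} equals P^{X_i|X4}, for i=1,2. -/
open MeasureTheory ProbabilityTheory
open scoped ENNReal

lemma stmt18_aux {Ω Ω' Ω3 Ω4 : Type*} [MeasurableSpace Ω] [MeasurableSpace Ω']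
    [MeasurableSpace Ω3] [MeasurableSpace Ω4]
    [StandardBorelSpace Ω'] [Nonempty Ω'] [StandardBorelSpace Ω4] [Nonempty Ω4]
    (P : Measure Ω) [IsProbabilityMeasure P]
    (Y : Ω → Ω') (X3 : Ω → Ω3) (f : Ω3 → Ω4)
    (hY : Measurable Y) (hX3 : Measurable X3) (hf : Measurable f)
    (M : ProbabilityTheory.Kernel Ω3 Ω') [IsMarkovKernel M]
    (hM : ∀ᵐ ω3 ∂(P.map X3), condDistrib Y X3 P ω3 = M ω3)
    (L : ProbabilityTheory.Kernel Ω4 Ω') [IsMarkovKernel L]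
    (hL : IsCondDistribKernel (P.map X3) M (condDistrib (f ∘ X3) X3 P) L) :
    ∀ᵐ ω4 ∂(P.map (f ∘ X3)), L ω4 = condDistrib Y (f ∘ X3) P ω4 := by
  have hX4 : Measurable (f ∘ X3) := hf.comp hX3
  -- the conditional distribution of f ∘ X3 given X3 is a.e. the Dirac kernel
  have hdet : P.map (fun ω => (X3 ω, (f ∘ X3) ω))
      = (P.map X3) ⊗ₘ ProbabilityTheory.Kernel.deterministic f hf := by
    ext s hs
    rw [Measure.compProd_apply hs, Measure.map_apply (hX3.prodMk hX4) hs]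
    have h1 : ∀ a, (ProbabilityTheory.Kernel.deterministic f hf) a (Prod.mk a ⁻¹' s)
        = Set.indicator ((fun x => (x, f x)) ⁻¹' s) 1 a := by
      intro a
      rw [Kernel.deterministic_apply' hf a (measurable_prodMk_left hs)]
      by_cases h : (a, f a) ∈ s
      · rw [Set.indicator_of_mem (show f a ∈ Prod.mk a ⁻¹' s from h),
          Set.indicator_of_mem (show a ∈ (fun x => (x, f x)) ⁻¹' s from h)]
        rfl
      · rw [Set.indicator_of_notMem (show f a ∉ Prod.mk a ⁻¹' s from h),
          Set.indicator_of_notMem (show a ∉ (fun x => (x, f x)) ⁻¹' s from h)]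
    simp_rw [h1]
    have hm : MeasurableSet ((fun x : Ω3 => (x, f x)) ⁻¹' s) :=
      (measurable_id.prodMk hf) hs
    rw [lintegral_indicator_one hm, Measure.map_apply hX3 hm]
    rfl
  have hdirac : ∀ᵐ ω3 ∂(P.map X3),
      condDistrib (f ∘ X3) X3 P ω3 = Measure.dirac (f ω3) := by
    filter_upwards [condDistrib_ae_eq_of_measure_eq_compProd_of_measurable hX3 hX4
      (κ := ProbabilityTheory.Kernel.deterministic f hf) hdet] with a ha
    rw [ha, Kernel.deterministic_apply]
  -- the kernel image of condDistrib (f∘X3) X3 P is P.map (f∘X3)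
  have himg : kernelImage (P.map X3) (condDistrib (f ∘ X3) X3 P) = P.map (f ∘ X3) := by
    ext s hs
    rw [kernelImage, Measure.bind_apply hs (Kernel.measurable _).aemeasurable]
    rw [lintegral_congr_ae (g := fun a => Set.indicator (f ⁻¹' s) 1 a)]
    · rw [lintegral_indicator_one (hf hs), Measure.map_apply hX3 (hf hs)]
      rw [Measure.map_apply hX4 hs]; rfl
    · filter_upwards [hdirac] with a ha
      rw [ha, Measure.dirac_apply' _ hs]
      by_cases h : f a ∈ s
      · rw [Set.indicator_of_mem h, Set.indicator_of_mem (show a ∈ f ⁻¹' s from h)]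
        rfl
      · rw [Set.indicator_of_notMem h,
          Set.indicator_of_notMem (show a ∉ f ⁻¹' s from h)]
  -- defining property for condDistrib Y (f∘X3) P
  have hmain : P.map (fun ω => ((f ∘ X3) ω, Y ω)) = (P.map (f ∘ X3)) ⊗ₘ L := by
    refine MeasureTheory.ext_of_generate_finite _ generateFrom_prod.symm isPiSystem_prod ?_ ?_
    · rintro _ ⟨A2, hA2, A1, hA1, rfl⟩
      rw [Measure.compProd_apply_prod hA2 hA1, ← himg, ← hL A1 A2 hA1 hA2]
      have lhs : ∫⁻ ω3, M ω3 A1 * condDistrib (f ∘ X3) X3 P ω3 A2 ∂(P.map X3)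
          = ∫⁻ ω3 in f ⁻¹' A2, condDistrib Y X3 P ω3 A1 ∂(P.map X3) := by
        rw [← lintegral_indicator (hf hA2)]
        refine lintegral_congr_ae ?_
        filter_upwards [hdirac, hM] with a ha hMa
        rw [ha, ← hMa, Measure.dirac_apply' _ hA2]
        by_cases h : f a ∈ A2 <;> simp [Set.indicator_apply, h]
      rw [lhs, ← Measure.compProd_apply_prod (hf hA2) hA1]
      -- compProd of map X3 and condDistrib Y X3 P is the joint law
      have hjoint : (P.map X3) ⊗ₘ condDistrib Y X3 P = P.map (fun ω => (X3 ω, Y ω)) := by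
        have hfst : P.map X3 = (P.map (fun ω => (X3 ω, Y ω))).fst := by
          rw [Measure.fst_map_prodMk hY]
        rw [hfst, condDistrib, Measure.disintegrate]
      rw [hjoint, Measure.map_apply (hX3.prodMk hY) ((hf hA2).prod hA1),
        Measure.map_apply (hX4.prodMk hY) (hA2.prod hA1)]
      rfl
    · have h1 : IsProbabilityMeasure ((P.map (f ∘ X3)) ⊗ₘ L) := by
        have : IsProbabilityMeasure (P.map (f ∘ X3)) :=
          Measure.isProbabilityMeasure_map hX4.aemeasurable
        infer_instance
      have h2 : IsProbabilityMeasure (P.map (fun ω => (f (X3 ω), Y ω))) :=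
        Measure.isProbabilityMeasure_map ((hf.comp hX3).prodMk hY).aemeasurable
      simp [measure_univ]
  filter_upwards [condDistrib_ae_eq_of_measure_eq_compProd_of_measurable hX4 hY (κ := L) hmain] with a ha
  exact ha.symm

/-- If `X4 = f ∘ X3`: under conditional independence of `X1, X2` given `X3`, the conditional
distribution (w.r.t. `P^{X3}`) of the diagonal product kernel `P^{X1|X3} ×ₖ P^{X2|X3}` given
the kernel `P^{X4|X3}` equals `P^{(X1,X2)|X4}`; and, without assuming conditional independence,
the conditional distribution of `P^{Xi|X3}` given `P^{X4|X3}` equals `P^{Xi|X4}`, `i = 1, 2`. -/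
theorem stmt18 {Ω Ω1 Ω2 Ω3 Ω4 : Type*} [MeasurableSpace Ω] [MeasurableSpace Ω1]
    [MeasurableSpace Ω2] [MeasurableSpace Ω3] [MeasurableSpace Ω4]
    [StandardBorelSpace Ω1] [Nonempty Ω1] [StandardBorelSpace Ω2] [Nonempty Ω2]
    [StandardBorelSpace Ω4] [Nonempty Ω4]
    (P : Measure Ω) [IsProbabilityMeasure P]
    (X1 : Ω → Ω1) (X2 : Ω → Ω2) (X3 : Ω → Ω3) (X4 : Ω → Ω4) (f : Ω3 → Ω4)
    (hX1 : Measurable X1) (hX2 : Measurable X2) (hX3 : Measurable X3) (hf : Measurable f)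
    (hX4 : X4 = f ∘ X3)
    (L1 : ProbabilityTheory.Kernel Ω4 Ω1) (L2 : ProbabilityTheory.Kernel Ω4 Ω2)
    (L12 : ProbabilityTheory.Kernel Ω4 (Ω1 × Ω2))
    [IsMarkovKernel L1] [IsMarkovKernel L2] [IsMarkovKernel L12]
    (hL1 : IsCondDistribKernel (P.map X3) (condDistrib X1 X3 P) (condDistrib X4 X3 P) L1)
    (hL2 : IsCondDistribKernel (P.map X3) (condDistrib X2 X3 P) (condDistrib X4 X3 P) L2)
    (hL12 : IsCondDistribKernel (P.map X3)
      (condDistrib X1 X3 P ×ₖ condDistrib X2 X3 P) (condDistrib X4 X3 P) L12) :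
    ((∀ᵐ ω3 ∂(P.map X3),
        condDistrib (fun ω => (X1 ω, X2 ω)) X3 P ω3
          = (condDistrib X1 X3 P ×ₖ condDistrib X2 X3 P) ω3) →
      ∀ᵐ ω4 ∂(P.map X4), L12 ω4 = condDistrib (fun ω => (X1 ω, X2 ω)) X4 P ω4) ∧
    (∀ᵐ ω4 ∂(P.map X4), L1 ω4 = condDistrib X1 X4 P ω4) ∧
    (∀ᵐ ω4 ∂(P.map X4), L2 ω4 = condDistrib X2 X4 P ω4) := by
  subst hX4
  refine ⟨fun h => ?_, ?_, ?_⟩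
  · exact stmt18_aux P (fun ω => (X1 ω, X2 ω)) X3 f (hX1.prodMk hX2) hX3 hf
      (condDistrib X1 X3 P ×ₖ condDistrib X2 X3 P) h L12 hL12
  · exact stmt18_aux P X1 X3 f hX1 hX3 hf (condDistrib X1 X3 P)
      (Filter.Eventually.of_forall fun _ => rfl) L1 hL1
  · exact stmt18_aux P X2 X3 f hX2 hX3 hf (condDistrib X2 X3 P)
      (Filter.Eventually.of_forall fun _ => rfl) L2 hL2
end

section
/- For a trivariate centered Gaussian vector (X1,X2,X3) with correlations ρ_{ij}, the kernels P^{X1|X3} and P^{X2|X3} are P^{X3}-independent if ρ_{13}=0 or ρ_{23}=0; in particular, choosing ρ_{23}=0 and ρ_{13}≠0 yields kernels P^{X1|X3}, P^{X2|X3} that are P^{X3}-independent while X1 and X3 are not independent. -/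
open MeasureTheory ProbabilityTheory
open scoped ENNReal

lemma swap_meas {α β γ : Type*} [MeasurableSpace α] [MeasurableSpace β]
    [MeasurableSpace γ] (M2 : ProbabilityTheory.Kernel α γ) [IsMarkovKernel M2]
    {s : Set (β × γ)} (hs : MeasurableSet s) :
    Measurable (Function.uncurry fun (x : β) (a : α) => M2 a (Prod.mk x ⁻¹' s)) := by
  have ht : MeasurableSet {p : (β × α) × γ | (p.1.1, p.2) ∈ s} :=
    (measurable_fst.fst.prodMk measurable_snd) hs
  have h2 := ProbabilityTheory.Kernel.measurable_kernel_prodMk_left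
    (κ := M2.comap (Prod.snd : β × α → α) measurable_snd) ht
  show Measurable fun p : β × α => (M2 p.2) (Prod.mk p.1 ⁻¹' s)
  exact h2

lemma kernelImage_congr_const {α γ : Type*} [MeasurableSpace α] [MeasurableSpace γ]
    (Q : Measure α) [IsProbabilityMeasure Q] (M : ProbabilityTheory.Kernel α γ)
    (ν : Measure γ) (h : ∀ᵐ a ∂Q, M a = ν) : kernelImage Q M = ν := by
  ext s hs
  rw [kernelImage, Measure.bind_apply hs M.measurable.aemeasurable]
  rw [lintegral_congr_ae (h.mono fun a ha => by rw [ha])]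
  simp

lemma kernelIndep_of_right_const {α β γ : Type*} [MeasurableSpace α] [MeasurableSpace β]
    [MeasurableSpace γ] (Q : Measure α) [IsProbabilityMeasure Q]
    (M1 : ProbabilityTheory.Kernel α β) (M2 : ProbabilityTheory.Kernel α γ)
    [IsMarkovKernel M1] [IsMarkovKernel M2]
    (ν : Measure γ) [IsProbabilityMeasure ν] (h : ∀ᵐ a ∂Q, M2 a = ν) :
    KernelIndep Q M1 M2 := by
  have himg2 : kernelImage Q M2 = ν := kernelImage_congr_const Q M2 ν h
  rw [KernelIndep, himg2]
  ext s hs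
  rw [kernelImage, Measure.bind_apply hs (M1 ×ₖ M2).measurable.aemeasurable]
  rw [Measure.prod_apply hs, kernelImage,
    Measure.lintegral_bind M1.measurable.aemeasurable (measurable_measure_prodMk_left hs).aemeasurable]
  refine lintegral_congr_ae (h.mono fun a ha => ?_)
  show ((M1 ×ₖ M2) a) s = ∫⁻ x, ν (Prod.mk x ⁻¹' s) ∂(M1 a)
  rw [Kernel.prod_apply, ha, Measure.prod_apply hs]

lemma kernelIndep_of_left_const {α β γ : Type*} [MeasurableSpace α] [MeasurableSpace β]
    [MeasurableSpace γ] (Q : Measure α) [IsProbabilityMeasure Q]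
    (M1 : ProbabilityTheory.Kernel α β) (M2 : ProbabilityTheory.Kernel α γ)
    [IsMarkovKernel M1] [IsMarkovKernel M2]
    (μ : Measure β) [IsProbabilityMeasure μ] (h : ∀ᵐ a ∂Q, M1 a = μ) :
    KernelIndep Q M1 M2 := by
  have himg1 : kernelImage Q M1 = μ := kernelImage_congr_const Q M1 μ h
  haveI : IsProbabilityMeasure (kernelImage Q M2) := by
    constructor
    rw [kernelImage, Measure.bind_apply MeasurableSet.univ M2.measurable.aemeasurable]
    simp
  rw [KernelIndep, himg1]
  ext s hs
  rw [kernelImage, Measure.bind_apply hs (M1 ×ₖ M2).measurable.aemeasurable]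
  rw [Measure.prod_apply hs, kernelImage]
  have hswap : ∫⁻ x, (Q.bind fun a => M2 a) (Prod.mk x ⁻¹' s) ∂μ
      = ∫⁻ x, ∫⁻ a, M2 a (Prod.mk x ⁻¹' s) ∂Q ∂μ :=
    lintegral_congr fun x =>
      Measure.bind_apply (measurable_prodMk_left hs) M2.measurable.aemeasurable
  rw [hswap, lintegral_lintegral_swap (swap_meas M2 hs).aemeasurable]
  refine lintegral_congr_ae (h.mono fun a ha => ?_)
  show ((M1 ×ₖ M2) a) s = ∫⁻ x, (M2 a) (Prod.mk x ⁻¹' s) ∂μ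
  rw [Kernel.prod_apply, ← ha, Measure.prod_apply hs]

/-- For a trivariate centered Gaussian vector `(X1, X2, X3)` with correlations `ρ_{ij}`, the
kernels `P^{X1|X3}` and `P^{X2|X3}` are `P^{X3}`-independent if `ρ13 = 0` or `ρ23 = 0`;
in particular, if `ρ23 = 0` and `ρ13 ≠ 0` the kernels are `P^{X3}`-independent while `X1` and
`X3` are not independent. -/
theorem stmt19 {Ω : Type*} [MeasurableSpace Ω] (P : Measure Ω) [IsProbabilityMeasure P]
    (X1 X2 X3 : Ω → ℝ) (hX1 : Measurable X1) (hX2 : Measurable X2) (hX3 : Measurable X3)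
    (σ1 σ2 σ3 : ℝ) (hσ1 : 0 < σ1) (hσ2 : 0 < σ2) (hσ3 : 0 < σ3)
    (ρ13 ρ23 : ℝ) (hρ13 : |ρ13| ≤ 1) (hρ23 : |ρ23| ≤ 1)
    -- marginal law of `X3` is centered Gaussian with variance `σ3²`
    (hlaw3 : P.map X3 = gaussianReal 0 (Real.toNNReal (σ3 ^ 2)))
    -- Gaussian regular conditional distributions of `X1` and `X2` given `X3`
    (hcd1 : ∀ᵐ x3 ∂(P.map X3),
      condDistrib X1 X3 P x3
        = gaussianReal ((σ1 * ρ13 / σ3) * x3) (Real.toNNReal (σ1 ^ 2 * (1 - ρ13 ^ 2))))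
    (hcd2 : ∀ᵐ x3 ∂(P.map X3),
      condDistrib X2 X3 P x3
        = gaussianReal ((σ2 * ρ23 / σ3) * x3) (Real.toNNReal (σ2 ^ 2 * (1 - ρ23 ^ 2))))
    -- second moments: centered, with covariance `Cov(X1,X3) = ρ13·σ1·σ3`
    (hL2_1 : MemLp X1 2 P) (hL2_3 : MemLp X3 2 P)
    (hmean1 : ∫ ω, X1 ω ∂P = 0) (hmean3 : ∫ ω, X3 ω ∂P = 0)
    (hcov13 : ∫ ω, X1 ω * X3 ω ∂P = ρ13 * σ1 * σ3) :
    ((ρ13 = 0 ∨ ρ23 = 0) →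
      KernelIndep (P.map X3) (condDistrib X1 X3 P) (condDistrib X2 X3 P)) ∧
    (ρ23 = 0 → ρ13 ≠ 0 →
      KernelIndep (P.map X3) (condDistrib X1 X3 P) (condDistrib X2 X3 P) ∧
        ¬ IndepFun X1 X3 P) := by
  haveI : IsProbabilityMeasure (P.map X3) := by rw [hlaw3]; infer_instance
  have hKI : (ρ13 = 0 ∨ ρ23 = 0) →
      KernelIndep (P.map X3) (condDistrib X1 X3 P) (condDistrib X2 X3 P) := by
    rintro (h13 | h23)
    · refine kernelIndep_of_left_const _ _ _
        (gaussianReal 0 (Real.toNNReal (σ1 ^ 2))) ?_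
      filter_upwards [hcd1] with x3 hx3
      rw [hx3, h13]
      norm_num
    · refine kernelIndep_of_right_const _ _ _
        (gaussianReal 0 (Real.toNNReal (σ2 ^ 2))) ?_
      filter_upwards [hcd2] with x3 hx3
      rw [hx3, h23]
      norm_num
  refine ⟨hKI, fun h23 h13 => ⟨hKI (Or.inr h23), fun hindep => ?_⟩⟩
  have := hindep.integral_mul_eq_mul_integral hL2_1.aestronglyMeasurable hL2_3.aestronglyMeasurable
  rw [show X1 * X3 = fun ω => X1 ω * X3 ω from rfl] at this
  rw [hcov13, hmean1, hmean3, mul_zero] at this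
  exact h13 (by
    rcases mul_eq_zero.mp this with h | h
    · rcases mul_eq_zero.mp h with h' | h'
      · exact h'
      · exact absurd h' hσ1.ne'
    · exact absurd h hσ3.ne')
end
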